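/- Let p be a prime and H a finite p-group that is not elementary abelian (i.e., H is not both abelian and of exponent dividing p). Let Z_p(H) be the subgroup of the center of H consisting of the elements x with x^p = 1, and let H/p denote the quotient of H by the normal subgroup generated by all commutators and all p-th powers (the maximal elementary abelian p-quotient). Then the composite homomorphism Z_p(H) → H → H/p has nontrivial kernel. -/

import Mathlib

open scoped commutatorElement

/-- Let `p` be a prime and `H` a finite `p`-group that is not
elementary abelian.  Then the composite `Z_p(H) → H → H/p` has nontrivial kernel,
where `Z_p(H) = {x ∈ center H | x ^ p = 1}` and `H/p` is the quotient of `H` by the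
normal subgroup generated by all commutators and all `p`-th powers. -/
theorem stmt0 (p : ℕ) (hp : p.Prime) (H : Type*) [Group H] [Fintype H]
    (hH : IsPGroup p H)
    (hne : ¬ ((∀ a b : H, a * b = b * a) ∧ ∀ x : H, x ^ p = 1)) :
    ∃ x : H, x ∈ Subgroup.center H ∧ x ^ p = 1 ∧ x ≠ 1 ∧
      x ∈ Subgroup.normalClosure
        {y : H | (∃ a b : H, y = ⁅a, b⁆) ∨ ∃ a : H, y = a ^ p} := by
  haveI : Fact p.Prime := ⟨hp⟩
  set S : Set H := {y : H | (∃ a b : H, y = ⁅a, b⁆) ∨ ∃ a : H, y = a ^ p} with hS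
  set N : Subgroup H := Subgroup.normalClosure S with hN
  haveI : N.Normal := Subgroup.normalClosure_normal
  -- N is nontrivial
  have hNne : ∃ n : H, n ∈ N ∧ n ≠ 1 := by
    by_contra hcon
    push_neg at hcon
    apply hne
    constructor
    · intro a b
      have : ⁅a, b⁆ = 1 := hcon _ (Subgroup.subset_normalClosure (Or.inl ⟨a, b, rfl⟩))
      rwa [commutatorElement_eq_one_iff_mul_comm] at this
    · intro x
      exact hcon _ (Subgroup.subset_normalClosure (Or.inr ⟨x, rfl⟩))
  obtain ⟨n₀, hn₀N, hn₀⟩ := hNne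
  -- N is a nontrivial p-group, so p ∣ card N
  have hNp : IsPGroup p N := hH.to_subgroup N
  haveI : Nontrivial N := ⟨⟨⟨n₀, hn₀N⟩, 1, by simpa using hn₀⟩⟩
  have hdvd : p ∣ Nat.card N := by
    obtain ⟨k, hk0, hk⟩ := hNp.nontrivial_iff_card.mp inferInstance
    exact hk ▸ dvd_pow_self p hk0.ne'
  -- conjugation action of ConjAct H on N; 1 is a fixed point; find another
  have h1 : (1 : N) ∈ MulAction.fixedPoints (ConjAct H) N := by
    intro g
    simp [Subtype.ext_iff, ConjAct.Subgroup.val_conj_smul]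
  have hfix := (hH.of_equiv ConjAct.toConjAct).exists_fixed_point_of_prime_dvd_card_of_fixed_point
    (α := N) hdvd h1
  obtain ⟨⟨z, hzN⟩, hzfix, hz1⟩ := hfix
  have hzne : z ≠ 1 := by
    intro h
    exact hz1 (Subtype.ext h.symm)
  -- z is central
  have hzc : z ∈ Subgroup.center H := by
    rw [Subgroup.mem_center_iff]
    intro g
    have := hzfix (ConjAct.toConjAct g)
    rw [Subtype.ext_iff, ConjAct.Subgroup.val_conj_smul] at this
    simp only [ConjAct.toConjAct_smul] at this
    calc g * z = (g * z * g⁻¹) * g := by group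
    _ = z * g := by rw [this]
  -- take a suitable power of z of order p
  obtain ⟨m, hm⟩ := hH z
  have hord : orderOf z ∣ p ^ m := orderOf_dvd_of_pow_eq_one hm
  obtain ⟨k, hkm, hk⟩ := (Nat.dvd_prime_pow hp).mp hord
  have hk0 : k ≠ 0 := by
    intro h
    subst h
    simp only [pow_zero] at hk
    exact hzne (orderOf_eq_one_iff.mp hk)
  refine ⟨z ^ p ^ (k - 1), Subgroup.pow_mem _ hzc _, ?_, ?_, Subgroup.pow_mem _ hzN _⟩
  · rw [← pow_mul, ← pow_succ, Nat.sub_add_cancel (Nat.one_le_iff_ne_zero.mpr hk0), ← hk]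
    exact pow_orderOf_eq_one z
  · intro h
    have := orderOf_dvd_of_pow_eq_one h
    rw [hk] at this
    have hlt : p ^ (k - 1) < p ^ k := Nat.pow_lt_pow_right hp.one_lt (Nat.sub_lt (Nat.pos_of_ne_zero hk0) one_pos)
    exact absurd (Nat.le_of_dvd (Nat.pos_of_ne_zero (pos_iff_ne_zero.mp (Nat.pow_pos hp.pos))) this) (not_le_of_gt hlt)
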